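/- arXiv:1801.01302 — 2 statements merged into one kernel-verified Lean document; each statement's English description precedes it below -/
import Mathlib

section
/- Let g : ℝ → ℝ be monotone nondecreasing, f : ℝ → [0,+∞) Borel measurable, and A ⊂ ℝ a Borel set. Then ∫_{g⁻¹(A)} (f ∘ g)(x) · g'(x) dx ≤ ∫_A f dL¹, where g' denotes the (almost everywhere defined) derivative of g and L¹ is Lebesgue measure. -/
open Set MeasureTheory

/-- If a monotone function takes the same value at `x` and at some point strictly to the
right of `x`, and it is differentiable at `x`, then its derivative at `x` vanishes. -/
lemma deriv_eq_zero_of_monotone_right {g : ℝ → ℝ} (hg : Monotone g) {x y : ℝ} (hxy : x < y)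
    (heq : g y = g x) (hd : DifferentiableAt ℝ g x) : deriv g x = 0 := by
  have hconst : ∀ t ∈ Icc x y, g t = g x := fun t ht =>
    le_antisymm (heq ▸ hg ht.2) (hg ht.1)
  have h1 : HasDerivWithinAt g (deriv g x) (Ici x) x := hd.hasDerivAt.hasDerivWithinAt
  have h2 : HasDerivWithinAt g 0 (Ici x) x := by
    have hc : HasDerivWithinAt (fun _ => g x) 0 (Ici x) x :=
      hasDerivWithinAt_const x (Ici x) (g x)
    apply hc.congr_of_eventuallyEq_of_mem ?_ self_mem_Ici
    have hmem : Icc x y ∈ nhdsWithin x (Ici x) := by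
      rw [← Ici_inter_Iic]
      exact inter_mem_nhdsWithin _ (Iic_mem_nhds hxy)
    filter_upwards [hmem] with t ht using hconst t ht
  have hu : UniqueDiffWithinAt ℝ (Ici x) x := uniqueDiffOn_Ici x x self_mem_Ici
  have e1 := h1.derivWithin hu
  have e2 := h2.derivWithin hu
  rw [← e1, e2]

/-- Left-sided version. -/
lemma deriv_eq_zero_of_monotone_left {g : ℝ → ℝ} (hg : Monotone g) {x y : ℝ} (hxy : y < x)
    (heq : g y = g x) (hd : DifferentiableAt ℝ g x) : deriv g x = 0 := by
  have hconst : ∀ t ∈ Icc y x, g t = g x := fun t ht =>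
    le_antisymm (hg ht.2) (heq ▸ hg ht.1)
  have h1 : HasDerivWithinAt g (deriv g x) (Iic x) x := hd.hasDerivAt.hasDerivWithinAt
  have h2 : HasDerivWithinAt g 0 (Iic x) x := by
    have hc : HasDerivWithinAt (fun _ => g x) 0 (Iic x) x :=
      hasDerivWithinAt_const x (Iic x) (g x)
    apply hc.congr_of_eventuallyEq_of_mem ?_ self_mem_Iic
    have hmem : Icc y x ∈ nhdsWithin x (Iic x) := by
      rw [← Ici_inter_Iic, inter_comm]
      exact inter_mem_nhdsWithin _ (Ici_mem_nhds hxy)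
    filter_upwards [hmem] with t ht using hconst t ht
  have hu : UniqueDiffWithinAt ℝ (Iic x) x := uniqueDiffOn_Iic x x self_mem_Iic
  have e1 := h1.derivWithin hu
  have e2 := h2.derivWithin hu
  rw [← e1, e2]

theorem stmt_5 (g : ℝ → ℝ) (hg : Monotone g)
    (f : ℝ → ℝ) (hf : Measurable f) (hf0 : ∀ x, 0 ≤ f x)
    (A : Set ℝ) (hA : MeasurableSet A) :
    ∫⁻ x in g ⁻¹' A, ENNReal.ofReal (f (g x) * deriv g x)
      ≤ ∫⁻ x in A, ENNReal.ofReal (f x) := by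
  set F : ℝ → ENNReal := fun x => ENNReal.ofReal (f (g x) * deriv g x) with hF
  set E : Set ℝ := g ⁻¹' A ∩ ({x | DifferentiableAt ℝ g x} ∩ {x | 0 < deriv g x}) with hE
  have hgm : Measurable g := hg.measurable
  have hpre : MeasurableSet (g ⁻¹' A) := hgm hA
  have hEmeas : MeasurableSet E :=
    hpre.inter ((measurableSet_of_differentiableAt ℝ g).inter
      (measurableSet_lt measurable_const (measurable_deriv g)))
  -- injectivity of g on E
  have hinj : InjOn g E := by
    intro x hx y hy hxy
    by_contra hne
    rcases lt_or_gt_of_ne hne with h | h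
    · exact absurd (deriv_eq_zero_of_monotone_right hg h hxy.symm hx.2.1)
        (show (0:ℝ) < deriv g x from hx.2.2).ne'
    · exact absurd (deriv_eq_zero_of_monotone_left hg h hxy.symm hx.2.1)
        (show (0:ℝ) < deriv g x from hx.2.2).ne'
  -- step 1: the integral over the preimage equals the integral over E
  have step1 : ∫⁻ x in g ⁻¹' A, F x ≤ ∫⁻ x in E, F x := by
    have hcongr : ∀ᵐ x ∂(volume.restrict (g ⁻¹' A)), F x = E.indicator F x := by
      have hae : ∀ᵐ x, DifferentiableAt ℝ g x := hg.ae_differentiableAt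
      refine (ae_restrict_iff' hpre).2 ?_
      filter_upwards [hae] with x hdx hxA
      by_cases hxE : x ∈ E
      · rw [indicator_of_mem hxE]
      · rw [indicator_of_notMem hxE]
        have hd0 : deriv g x ≤ 0 := by
          by_contra hpos
          exact hxE ⟨hxA, hdx, lt_of_not_ge hpos⟩
        have : f (g x) * deriv g x ≤ 0 :=
          mul_nonpos_of_nonneg_of_nonpos (hf0 _) hd0
        simp [hF, ENNReal.ofReal_eq_zero.2 this]
    calc ∫⁻ x in g ⁻¹' A, F x = ∫⁻ x in g ⁻¹' A, E.indicator F x :=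
          lintegral_congr_ae hcongr
      _ ≤ ∫⁻ x, E.indicator F x := setLIntegral_le_lintegral _ _
      _ = ∫⁻ x in E, F x := lintegral_indicator hEmeas F
  -- step 2: change of variables on E
  have hf' : ∀ x ∈ E, HasFDerivWithinAt g
      ((1 : ℝ →L[ℝ] ℝ).smulRight (deriv g x)) E x :=
    fun x hx => (hx.2.1.hasDerivAt.hasDerivWithinAt (s := E)).hasFDerivWithinAt
  have step2 : ∫⁻ x in E, F x = ∫⁻ y in g '' E, ENNReal.ofReal (f y) := by
    rw [lintegral_image_eq_lintegral_abs_det_fderiv_mul volume hEmeas hf' hinj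
      (fun y => ENNReal.ofReal (f y))]
    refine setLIntegral_congr_fun hEmeas (fun x hx => ?_)
    have hd : (0:ℝ) < deriv g x := hx.2.2
    simp only [hF, ContinuousLinearMap.smulRight_one_eq_toSpanSingleton, ContinuousLinearMap.det_toSpanSingleton, abs_of_pos hd,
      mul_comm (f (g x)), ENNReal.ofReal_mul hd.le]
  -- step 3: g '' E ⊆ A
  have step3 : ∫⁻ y in g '' E, ENNReal.ofReal (f y) ≤ ∫⁻ y in A, ENNReal.ofReal (f y) :=
    lintegral_mono_set fun y hy => by
      rcases hy with ⟨x, hx, rfl⟩; exact hx.1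
  calc ∫⁻ x in g ⁻¹' A, F x ≤ ∫⁻ x in E, F x := step1
    _ = ∫⁻ y in g '' E, ENNReal.ofReal (f y) := step2
    _ ≤ ∫⁻ y in A, ENNReal.ofReal (f y) := step3
end

section
/- Let g : ℝ → ℝ be a monotone nondecreasing function and A ⊂ ℝ a Borel set. Then ∫_{g⁻¹(A)} g'(x) dx ≤ L¹(A), where g' is the almost-everywhere derivative of g and L¹ denotes Lebesgue measure. -/
open Set MeasureTheory

theorem stmt_6 (g : ℝ → ℝ) (hg : Monotone g)
    (A : Set ℝ) (hA : MeasurableSet A) :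
    ∫⁻ x in g ⁻¹' A, ENNReal.ofReal (deriv g x) ≤ volume A := by
  classical
  set f : ℝ → ENNReal := fun x => ENNReal.ofReal (deriv g x) with hf
  -- the set of values with nontrivial fibers
  set C : Set ℝ := {c | ∃ a b : ℝ, a < b ∧ g a = c ∧ g b = c} with hC
  -- fibers are order-connected, hence convex
  have fiber_ord : ∀ c : ℝ, OrdConnected (g ⁻¹' {c}) := by
    intro c
    constructor
    intro x hx y hy z hz
    simp only [mem_preimage, mem_singleton_iff] at hx hy ⊢
    exact le_antisymm (hy ▸ hg hz.2) (hx ▸ hg hz.1)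
  have fiber_convex : ∀ c : ℝ, Convex ℝ (g ⁻¹' {c}) := fun c =>
    (fiber_ord c).convex
  -- C is countable
  have hCc : C.Countable := by
    have hdisj : C.PairwiseDisjoint (fun c => g ⁻¹' {c}) := by
      intro c _ d _ hcd
      exact Disjoint.preimage g (by simpa using hcd)
    refine hdisj.countable_of_nonempty_interior fun c hc => ?_
    obtain ⟨a, b, hab, ha, hb⟩ := hc
    have : Ioo a b ⊆ interior (g ⁻¹' {c}) := by
      rw [← interior_Icc]
      apply interior_mono
      intro z hz
      simp only [mem_preimage, mem_singleton_iff]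
      exact le_antisymm (hb ▸ hg hz.2) (ha ▸ hg hz.1)
    exact ⟨(a + b) / 2, this ⟨by linarith, by linarith⟩⟩
  have hCm : MeasurableSet C := hCc.measurableSet
  set N : Set ℝ := g ⁻¹' C with hN
  have hNm : MeasurableSet N := hg.measurable hCm
  set D : Set ℝ := {x | DifferentiableAt ℝ g x} with hD
  have hDm : MeasurableSet D := measurableSet_of_differentiableAt (𝕜 := ℝ) (f := g)
  set T : Set ℝ := (g ⁻¹' A ∩ D) \ N with hT
  have hTm : MeasurableSet T := ((hg.measurable hA).inter hDm).diff hNm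
  -- the integral over the complement of T within g ⁻¹' A vanishes
  have key0 : ∫⁻ x in (g ⁻¹' A) \ T, f x = 0 := by
    have hsub : (g ⁻¹' A) \ T ⊆ N ∪ Dᶜ := by
      intro x hx
      rcases hx with ⟨hxA, hxT⟩
      by_cases hxN : x ∈ N
      · exact Or.inl hxN
      by_cases hxD : x ∈ D
      · exact absurd ⟨⟨hxA, hxD⟩, hxN⟩ hxT
      · exact Or.inr hxD
    have h1 : ∫⁻ x in N ∪ Dᶜ, f x = 0 := by
      rw [lintegral_eq_zero_iff' (measurable_deriv g).ennreal_ofReal.aemeasurable]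
      -- a.e. x in N ∪ Dᶜ, deriv g x = 0
      have hnull : volume (N \ ⋃ c ∈ C, interior (g ⁻¹' {c})) = 0 := by
        have : N \ (⋃ c ∈ C, interior (g ⁻¹' {c})) ⊆
            ⋃ c ∈ C, frontier (g ⁻¹' {c}) := by
          intro x hx
          rcases hx with ⟨hxN, hxU⟩
          have hgx : g x ∈ C := hxN
          refine mem_biUnion hgx ?_
          constructor
          · exact subset_closure rfl
          · intro h
            exact hxU (mem_biUnion hgx h)
        refine measure_mono_null this ?_
        refine (measure_biUnion_null_iff hCc).2 fun c _ => ?_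
        exact (fiber_convex c).addHaar_frontier volume
      have hae : ∀ᵐ x, x ∉ N \ ⋃ c ∈ C, interior (g ⁻¹' {c}) :=
        measure_eq_zero_iff_ae_notMem.1 hnull
      rw [Filter.EventuallyEq, ae_restrict_iff' (hNm.union hDm.compl)]
      filter_upwards [hae] with x hx hxmem
      rcases hxmem with hxN | hxD
      · have hxU : x ∈ ⋃ c ∈ C, interior (g ⁻¹' {c}) := by
          by_contra h
          exact hx ⟨hxN, h⟩
        obtain ⟨c, _, hxc⟩ := by simpa using hxU
        have hnbhd : g =ᶠ[nhds x] fun _ => c := by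
          filter_upwards [mem_interior_iff_mem_nhds.1 hxc] with y hy
          exact hy
        have : deriv g x = deriv (fun _ : ℝ => c) x := hnbhd.deriv_eq
        simp only [f, this, deriv_const]
        simp
      · simp only [f, deriv_zero_of_not_differentiableAt hxD]
        simp
    refine le_antisymm ?_ (zero_le)
    calc ∫⁻ x in (g ⁻¹' A) \ T, f x ≤ ∫⁻ x in N ∪ Dᶜ, f x :=
          lintegral_mono_set hsub
      _ = 0 := h1
  -- the main estimate on T
  have key1 : ∫⁻ x in T, f x ≤ volume A := by
    have hInj : InjOn g T := by
      intro x hx y hy hxy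
      by_contra hne
      rcases lt_or_gt_of_ne hne with h | h
      · exact hx.2 (show g x ∈ C from ⟨x, y, h, rfl, hxy.symm⟩)
      · exact hx.2 (show g x ∈ C from ⟨y, x, h, hxy.symm, rfl⟩)
    have hder : ∀ x ∈ T, HasFDerivWithinAt g
        ((1 : ℝ →L[ℝ] ℝ).smulRight (deriv g x)) T x := by
      intro x hx
      exact (hx.1.2.hasDerivAt.hasDerivWithinAt).hasFDerivWithinAt
    have := lintegral_abs_det_fderiv_le_addHaar_image volume hTm hder hInj
    simp only [ContinuousLinearMap.smulRight_one_eq_toSpanSingleton, ContinuousLinearMap.det_toSpanSingleton] at this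
    have himg : volume (g '' T) ≤ volume A := by
      apply measure_mono
      rintro _ ⟨x, hx, rfl⟩
      exact hx.1.1
    refine le_trans (le_trans ?_ this) himg
    apply lintegral_mono
    intro x
    exact ENNReal.ofReal_le_ofReal (le_abs_self _)
  -- combine
  have hsplit : g ⁻¹' A = T ∪ ((g ⁻¹' A) \ T) := by
    rw [union_diff_cancel]
    exact fun x hx => hx.1.1
  calc ∫⁻ x in g ⁻¹' A, f x = ∫⁻ x in T ∪ ((g ⁻¹' A) \ T), f x := by rw [← hsplit]
    _ ≤ (∫⁻ x in T, f x) + ∫⁻ x in (g ⁻¹' A) \ T, f x := lintegral_union_le _ _ _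
    _ = ∫⁻ x in T, f x := by rw [key0, add_zero]
    _ ≤ volume A := key1
end
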